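/- arXiv:1208.3015 — 5 statements merged into one kernel-verified Lean document; each statement's English description precedes it below -/
import Mathlib

section
/- Define p_i(a,b) as: p_i if est_a ≤ est_i and lct_i ≤ lct_b; max(0, lct_b − lst_i) if est_a ≤ est_i but lct_i > lct_b; and max(0, min(lct_b, ect_i) − max(est_a, lst_i)) otherwise. Then in every feasible schedule, activity i executes for at least p_i(a,b) time units within the window [est_a, lct_b), i.e., |[S_i, S_i+p_i) ∩ [est_a, lct_b)| ≥ p_i(a,b). -/
open Finset

/-- In every feasible schedule, activity `i` executes at least `p_i(a,b)` time units within
the window `[est_a, lct_b)`, where `p_i(a,b)` is given by the three-case formula. -/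
theorem stmt_5 (esta lctb : ℤ) (est lst p S : ℤ)
    (hp : 0 < p) (hwin : esta < lctb)
    (hdom : est ≤ S) (hdom' : S ≤ lst) :
    (if esta ≤ est ∧ lst + p ≤ lctb then p
     else if esta ≤ est then max 0 (lctb - lst)
     else max 0 (min lctb (est + p) - max esta lst)) ≤
      ((Finset.Ico S (S + p) ∩ Finset.Ico esta lctb).card : ℤ) := by
  rw [Finset.Ico_inter_Ico, Int.card_Ico]
  split_ifs <;> omega
end

section
/- TTEF consistency check soundness: Let energy(a,b) = Σ_{i∈V} r_i · p_i(a,b), where p_i(a,b) is the minimal executed time of activity i within window [est_a, lct_b) (as defined via the case analysis on whether i lies in the task interval, has its latest free start before lct_b, or contributes only its compulsory part). If R·(lct_b − est_a) − energy(a,b) < 0, then the cumulative scheduling problem with the current domains is infeasible. -/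
open Finset

/-- TTEF consistency check soundness: if `R * (lct_b - est_a) - energy(a,b) < 0`, where
`energy(a,b) = Σ_i r_i * p_i(a,b)` with `p_i(a,b)` the three-case minimal executed time,
then the cumulative scheduling problem with the current domains is infeasible. -/
theorem stmt_6 {ι : Type*} (V : Finset ι) (est lst p r : ι → ℤ) (R : ℤ)
    (esta lctb : ℤ) (hwin : esta < lctb)
    (hp : ∀ i ∈ V, 0 < p i) (hr : ∀ i ∈ V, 0 ≤ r i)
    (hoverload :
      R * (lctb - esta) -
        (∑ i ∈ V, r i *
          (if esta ≤ est i ∧ lst i + p i ≤ lctb then p i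
           else if esta ≤ est i then max 0 (lctb - lst i)
           else max 0 (min lctb (est i + p i) - max esta (lst i)))) < 0) :
    ¬ ∃ S : ι → ℤ, (∀ i ∈ V, est i ≤ S i ∧ S i ≤ lst i) ∧
      (∀ τ : ℤ, ∑ i ∈ V.filter (fun i => S i ≤ τ ∧ τ < S i + p i), r i ≤ R) := by
  rintro ⟨S, hS, hload⟩
  set W := Finset.Ico esta lctb with hW
  have hcard : (W.card : ℤ) = lctb - esta := by
    rw [hW, Int.card_Ico, Int.toNat_of_nonneg (by omega)]
  have hsum : ∑ τ ∈ W, (∑ i ∈ V.filter (fun i => S i ≤ τ ∧ τ < S i + p i), r i)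
      ≤ R * (lctb - esta) := by
    calc ∑ τ ∈ W, (∑ i ∈ V.filter (fun i => S i ≤ τ ∧ τ < S i + p i), r i)
        ≤ ∑ _τ ∈ W, R := Finset.sum_le_sum fun τ _ => hload τ
      _ = R * (lctb - esta) := by
          rw [Finset.sum_const, nsmul_eq_mul, hcard, mul_comm]
  have hswap : ∑ τ ∈ W, (∑ i ∈ V.filter (fun i => S i ≤ τ ∧ τ < S i + p i), r i)
      = ∑ i ∈ V, r i * max 0 (min lctb (S i + p i) - max esta (S i)) := by
    calc ∑ τ ∈ W, (∑ i ∈ V.filter (fun i => S i ≤ τ ∧ τ < S i + p i), r i)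
        = ∑ τ ∈ W, ∑ i ∈ V, if S i ≤ τ ∧ τ < S i + p i then r i else 0 := by
          simp [Finset.sum_filter]
      _ = ∑ i ∈ V, ∑ τ ∈ W, if S i ≤ τ ∧ τ < S i + p i then r i else 0 :=
          Finset.sum_comm
      _ = ∑ i ∈ V, r i * max 0 (min lctb (S i + p i) - max esta (S i)) := by
          refine Finset.sum_congr rfl fun i _ => ?_
          rw [← Finset.sum_filter]
          have hfil : W.filter (fun τ => S i ≤ τ ∧ τ < S i + p i)
              = Finset.Ico (max esta (S i)) (min lctb (S i + p i)) := by
            rw [← Finset.Ico_inter_Ico]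
            ext τ
            simp [hW, Finset.mem_filter, Finset.mem_inter, Finset.mem_Ico]
          rw [hfil, Finset.sum_const, nsmul_eq_mul, Int.card_Ico,
            Int.toNat_eq_max, mul_comm, max_comm]
  have hbound : ∑ i ∈ V, r i *
      (if esta ≤ est i ∧ lst i + p i ≤ lctb then p i
       else if esta ≤ est i then max 0 (lctb - lst i)
       else max 0 (min lctb (est i + p i) - max esta (lst i)))
      ≤ ∑ i ∈ V, r i * max 0 (min lctb (S i + p i) - max esta (S i)) := by
    refine Finset.sum_le_sum fun i hi => ?_
    have h1 := hS i hi
    have h2 := hp i hi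
    refine mul_le_mul_of_nonneg_left ?_ (hr i hi)
    split_ifs <;> omega
  linarith [hswap ▸ hsum]
end

section
/- Validity of the naïve overload explanation: Suppose R·(lct_b − est_a) < Σ_{i : p_i(a,b) > 0} r_i · p_i(a,b). Then the conjunction over all i with p_i(a,b) > 0 of the bound literals (est_i ≤ S_i) ∧ (S_i ≤ lst_i) implies falsity, i.e., there is no assignment of start times satisfying est_i ≤ S_i ≤ lst_i for those activities together with the resource capacity constraint. -/
open Finset

/-- Validity of the naïve overload explanation: if
`R * (lct_b - est_a) < Σ_{i : p_i(a,b) > 0} r_i * p_i(a,b)`, then the conjunction of the bound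
literals `est_i ≤ S_i ∧ S_i ≤ lst_i` over all `i` with `p_i(a,b) > 0` together with the
resource capacity constraint is unsatisfiable. -/
theorem stmt_7 {ι : Type*} (V : Finset ι) (est lst p r : ι → ℤ) (R : ℤ)
    (esta lctb : ℤ) (hwin : esta < lctb)
    (hp : ∀ i ∈ V, 0 < p i) (hr : ∀ i ∈ V, 0 ≤ r i)
    (P : ι → ℤ)
    (hP : ∀ i ∈ V, P i =
      (if esta ≤ est i ∧ lst i + p i ≤ lctb then p i
       else if esta ≤ est i then max 0 (lctb - lst i)
       else max 0 (min lctb (est i + p i) - max esta (lst i))))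
    (hoverload : R * (lctb - esta) < ∑ i ∈ V.filter (fun i => 0 < P i), r i * P i) :
    ¬ ∃ S : ι → ℤ, (∀ i ∈ V, 0 < P i → est i ≤ S i ∧ S i ≤ lst i) ∧
      (∀ τ : ℤ, ∑ i ∈ V.filter (fun i => S i ≤ τ ∧ τ < S i + p i), r i ≤ R) := by
  rintro ⟨S, hS, hres⟩
  set T : Finset ℤ := Finset.Ico esta lctb with hT
  have hcard : ∀ i : ι, ((T ∩ Finset.Ico (S i) (S i + p i)).card : ℤ)
      = max 0 (min lctb (S i + p i) - max esta (S i)) := by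
    intro i
    rw [hT, Finset.Ico_inter_Ico, Int.card_Ico]
    omega
  -- swap sums
  have swap : ∑ τ ∈ T, ∑ i ∈ V.filter (fun i => S i ≤ τ ∧ τ < S i + p i), r i
      = ∑ i ∈ V, r i * ((T ∩ Finset.Ico (S i) (S i + p i)).card : ℤ) := by
    simp_rw [Finset.sum_filter]
    rw [Finset.sum_comm]
    refine Finset.sum_congr rfl fun i _ => ?_
    have hfilter : T.filter (fun τ => S i ≤ τ ∧ τ < S i + p i)
        = T ∩ Finset.Ico (S i) (S i + p i) := by
      ext τ
      simp [Finset.mem_Ico, hT, and_assoc]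
    rw [← Finset.sum_filter, hfilter, Finset.sum_const, nsmul_eq_mul, mul_comm]
  have hTcard : (T.card : ℤ) = lctb - esta := by
    rw [hT, Int.card_Ico]; omega
  have total : ∑ τ ∈ T, ∑ i ∈ V.filter (fun i => S i ≤ τ ∧ τ < S i + p i), r i
      ≤ R * (lctb - esta) := by
    calc ∑ τ ∈ T, ∑ i ∈ V.filter (fun i => S i ≤ τ ∧ τ < S i + p i), r i
        ≤ ∑ _τ ∈ T, R := Finset.sum_le_sum fun τ _ => hres τ
      _ = (T.card : ℤ) * R := by rw [Finset.sum_const, nsmul_eq_mul]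
      _ = R * (lctb - esta) := by rw [hTcard, mul_comm]
  have lower : ∑ i ∈ V.filter (fun i => 0 < P i), r i * P i
      ≤ ∑ i ∈ V, r i * ((T ∩ Finset.Ico (S i) (S i + p i)).card : ℤ) := by
    refine le_trans (Finset.sum_le_sum ?_)
      (Finset.sum_le_sum_of_subset_of_nonneg (Finset.filter_subset _ _) ?_)
    · intro i hi
      obtain ⟨hiV, hiP⟩ := Finset.mem_filter.mp hi
      obtain ⟨hb1, hb2⟩ := hS i hiV hiP
      have hpi := hp i hiV
      rw [hP i hiV] at hiP ⊢
      refine mul_le_mul_of_nonneg_left ?_ (hr i hiV)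
      rw [hcard i]
      split_ifs at hiP ⊢ with h1 h2 <;> omega
    · intro i hiV _
      exact mul_nonneg (hr i hiV) (Int.natCast_nonneg _)
  rw [← swap] at lower
  exact absurd (le_trans lower total) (not_le.mpr hoverload)
end

section
/- Energetic-reasoning overload criterion: For any integers a < b, define the minimal intersection of activity i with [a,b) as MI_i(a,b) = max(0, min(b − a, p_i, ect_i − a, b − lst_i)). If Σ_i r_i · MI_i(a,b) > R · (b − a), then the cumulative scheduling problem is infeasible. Moreover MI_i(a,b) equals the minimum over S_i ∈ [est_i, lst_i] of |[S_i, S_i+p_i) ∩ [a,b)|. -/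
open Finset

lemma aux_card (S p a b : ℤ) :
    ((Finset.Ico S (S + p) ∩ Finset.Ico a b).card : ℤ)
      = max 0 (min (min (b - a) p) (min (S + p - a) (b - S))) := by
  rw [Finset.Ico_inter_Ico, Int.card_Ico, Int.toNat_eq_max]
  simp only [min_def, max_def]
  split_ifs <;> omega

/-- Energetic-reasoning overload criterion: if
`Σ_i r_i * MI_i(a,b) > R * (b - a)` with
`MI_i(a,b) = max 0 (min (min (b-a) p_i) (min (ect_i - a) (b - lst_i)))`, then the cumulative
scheduling problem is infeasible; moreover `MI_i(a,b)` is the minimum over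
`S_i ∈ [est_i, lst_i]` of the executed time of `i` in `[a,b)`. -/
theorem stmt_15 {ι : Type*} (V : Finset ι) (est lst p r : ι → ℤ) (R : ℤ)
    (a b : ℤ) (hab : a < b)
    (hp : ∀ i ∈ V, 0 < p i) (hr : ∀ i ∈ V, 0 ≤ r i) (hdom : ∀ i ∈ V, est i ≤ lst i)
    (MI : ι → ℤ)
    (hMI : ∀ i ∈ V, MI i =
      max 0 (min (min (b - a) (p i)) (min (est i + p i - a) (b - lst i)))) :
    (R * (b - a) < ∑ i ∈ V, r i * MI i →
      ¬ ∃ S : ι → ℤ, (∀ i ∈ V, est i ≤ S i ∧ S i ≤ lst i) ∧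
        (∀ τ : ℤ, ∑ i ∈ V.filter (fun i => S i ≤ τ ∧ τ < S i + p i), r i ≤ R)) ∧
    (∀ i ∈ V,
      (∀ S : ℤ, est i ≤ S → S ≤ lst i →
        MI i ≤ ((Finset.Ico S (S + p i) ∩ Finset.Ico a b).card : ℤ)) ∧
      (∃ S : ℤ, est i ≤ S ∧ S ≤ lst i ∧
        ((Finset.Ico S (S + p i) ∩ Finset.Ico a b).card : ℤ) = MI i)) := by
  -- lower bound part
  have hlb : ∀ i ∈ V, ∀ S : ℤ, est i ≤ S → S ≤ lst i →
      MI i ≤ ((Finset.Ico S (S + p i) ∩ Finset.Ico a b).card : ℤ) := by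
    intro i hi S h1 h2
    rw [aux_card, hMI i hi]
    simp only [min_def, max_def]
    split_ifs <;> omega
  constructor
  · intro hlt ⟨S, hS, hcap⟩
    have key : ∀ i ∈ V, r i * MI i ≤
        ∑ τ ∈ Finset.Ico a b, (if S i ≤ τ ∧ τ < S i + p i then r i else 0) := by
      intro i hi
      have h1 : ∑ τ ∈ Finset.Ico a b, (if S i ≤ τ ∧ τ < S i + p i then r i else 0)
          = ((Finset.Ico (S i) (S i + p i) ∩ Finset.Ico a b).card : ℤ) * r i := by
        calc ∑ τ ∈ Finset.Ico a b, (if S i ≤ τ ∧ τ < S i + p i then r i else 0)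
            = ∑ τ ∈ Finset.Ico a b,
                (if τ ∈ Finset.Ico (S i) (S i + p i) then r i else 0) := by
              simp [Finset.mem_Ico]
          _ = ∑ τ ∈ Finset.Ico a b ∩ Finset.Ico (S i) (S i + p i), r i :=
              Finset.sum_ite_mem _ _ _
          _ = ((Finset.Ico a b ∩ Finset.Ico (S i) (S i + p i)).card : ℤ) * r i := by
              rw [Finset.sum_const, nsmul_eq_mul]
          _ = _ := by rw [Finset.inter_comm]
      rw [h1]
      exact mul_le_mul_of_nonneg_left (hlb i hi (S i) (hS i hi).1 (hS i hi).2) (hr i hi) |>.trans_eq (mul_comm _ _)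
    have h2 : ∑ i ∈ V, r i * MI i ≤ (b - a) * R := by
      calc ∑ i ∈ V, r i * MI i
          ≤ ∑ i ∈ V, ∑ τ ∈ Finset.Ico a b,
              (if S i ≤ τ ∧ τ < S i + p i then r i else 0) := Finset.sum_le_sum key
        _ = ∑ τ ∈ Finset.Ico a b, ∑ i ∈ V,
              (if S i ≤ τ ∧ τ < S i + p i then r i else 0) := Finset.sum_comm
        _ = ∑ τ ∈ Finset.Ico a b,
              ∑ i ∈ V.filter (fun i => S i ≤ τ ∧ τ < S i + p i), r i := by
            simp [Finset.sum_filter]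
        _ ≤ ∑ τ ∈ Finset.Ico a b, R := Finset.sum_le_sum (fun τ _ => hcap τ)
        _ = (b - a) * R := by
            rw [Finset.sum_const, nsmul_eq_mul, Int.card_Ico]
            congr 1
            omega
    linarith [mul_comm R (b - a)]
  · intro i hi
    refine ⟨hlb i hi, ?_⟩
    by_cases h : est i + p i - a ≤ b - lst i
    · refine ⟨est i, le_refl _, hdom i hi, ?_⟩
      rw [aux_card, hMI i hi]
      have := hdom i hi
      simp only [min_def, max_def]
      split_ifs <;> omega
    · refine ⟨lst i, hdom i hi, le_refl _, ?_⟩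
      rw [aux_card, hMI i hi]
      have := hdom i hi
      simp only [min_def, max_def]
      split_ifs <;> omega
end

section
/- Edge-finding energy balance: Let u be an activity with r_u > 0 and est_a ≤ est_u < lct_b, and let E' = Σ_{i≠u} r_i·p_i(a,b) be a valid lower bound on the energy consumed by activities other than u in window W = [est_a, lct_b) in every feasible schedule. Then in every feasible schedule, the energy consumed by u in W is at most R·(lct_b − est_a) − E'; hence if u starts at time s, then r_u · max(0, min(lct_b − s, p_u)) ≤ R·(lct_b − est_a) − E', which yields s ≥ lct_b − ⌊(R·(lct_b − est_a) − E')/r_u⌋ whenever p_u ≥ lct_b − s > 0 and the bound is violated otherwise. -/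
open Finset

/-- Edge-finding energy balance: if `E'` is a valid lower bound on the energy consumed by
activities other than `u` in the window `W = [est_a, lct_b)` in every feasible schedule, then
in every feasible schedule the energy of `u` in `W` is at most `R (lct_b - est_a) - E'`; hence
`r_u * max 0 (min (lct_b - S_u) p_u) ≤ R (lct_b - est_a) - E'`, which yields
`S_u ≥ lct_b - ⌊(R (lct_b - est_a) - E') / r_u⌋` whenever `0 < lct_b - S_u ≤ p_u`. -/
theorem stmt_17 {ι : Type*} [DecidableEq ι] (V : Finset ι) (est lst p r : ι → ℤ) (R : ℤ)
    (esta lctb : ℤ) (hwin : esta < lctb)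
    (hp : ∀ i ∈ V, 0 < p i) (hr : ∀ i ∈ V, 0 ≤ r i)
    (u : ι) (hu : u ∈ V) (hru : 0 < r u) (hestu : esta ≤ est u) (hestu' : est u < lctb)
    (E' : ℤ)
    (hE' : ∀ S : ι → ℤ, (∀ i ∈ V, est i ≤ S i ∧ S i ≤ lst i) →
      (∀ τ : ℤ, ∑ i ∈ V.filter (fun i => S i ≤ τ ∧ τ < S i + p i), r i ≤ R) →
      E' ≤ ∑ i ∈ V.erase u,
        r i * ((Finset.Ico (S i) (S i + p i) ∩ Finset.Ico esta lctb).card : ℤ)) :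
    ∀ S : ι → ℤ, (∀ i ∈ V, est i ≤ S i ∧ S i ≤ lst i) →
      (∀ τ : ℤ, ∑ i ∈ V.filter (fun i => S i ≤ τ ∧ τ < S i + p i), r i ≤ R) →
      (r u * ((Finset.Ico (S u) (S u + p u) ∩ Finset.Ico esta lctb).card : ℤ)
          ≤ R * (lctb - esta) - E') ∧
      (r u * max 0 (min (lctb - S u) (p u)) ≤ R * (lctb - esta) - E') ∧
      (0 < lctb - S u → lctb - S u ≤ p u →
        lctb - ⌊((R * (lctb - esta) - E' : ℤ) : ℚ) / (r u : ℚ)⌋ ≤ S u) := by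
  intro S hS hcap
  have hcard : ∀ i : ι, ((Finset.Ico (S i) (S i + p i) ∩ Finset.Ico esta lctb).card : ℤ)
      = ∑ τ ∈ Finset.Ico esta lctb, (if S i ≤ τ ∧ τ < S i + p i then (1:ℤ) else 0) := by
    intro i
    rw [show Finset.Ico (S i) (S i + p i) ∩ Finset.Ico esta lctb
        = (Finset.Ico esta lctb).filter (fun τ => S i ≤ τ ∧ τ < S i + p i) by
      ext τ; simp [Finset.mem_Ico, Finset.mem_filter]; tauto]
    rw [Finset.sum_boole]
  have htotal : ∑ i ∈ V, r i * ((Finset.Ico (S i) (S i + p i) ∩ Finset.Ico esta lctb).card : ℤ)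
      ≤ R * (lctb - esta) := by
    calc ∑ i ∈ V, r i * ((Finset.Ico (S i) (S i + p i) ∩ Finset.Ico esta lctb).card : ℤ)
        = ∑ i ∈ V, ∑ τ ∈ Finset.Ico esta lctb,
            (if S i ≤ τ ∧ τ < S i + p i then r i else 0) := by
          refine Finset.sum_congr rfl fun i _ => ?_
          rw [hcard i, Finset.mul_sum]
          refine Finset.sum_congr rfl fun τ _ => ?_
          split <;> simp
      _ = ∑ τ ∈ Finset.Ico esta lctb, ∑ i ∈ V,
            (if S i ≤ τ ∧ τ < S i + p i then r i else 0) := Finset.sum_comm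
      _ = ∑ τ ∈ Finset.Ico esta lctb,
            ∑ i ∈ V.filter (fun i => S i ≤ τ ∧ τ < S i + p i), r i := by
          refine Finset.sum_congr rfl fun τ _ => ?_
          rw [Finset.sum_filter]
      _ ≤ ∑ _τ ∈ Finset.Ico esta lctb, R := Finset.sum_le_sum fun τ _ => hcap τ
      _ = ((Finset.Ico esta lctb).card : ℤ) * R := by rw [Finset.sum_const, nsmul_eq_mul]
      _ = R * (lctb - esta) := by
          rw [Int.card_Ico, Int.toNat_of_nonneg (by omega)]; ring
  have hsplit := Finset.add_sum_erase V
    (fun i => r i * ((Finset.Ico (S i) (S i + p i) ∩ Finset.Ico esta lctb).card : ℤ)) hu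
  have hE'' := hE' S hS hcap
  have h1 : r u * ((Finset.Ico (S u) (S u + p u) ∩ Finset.Ico esta lctb).card : ℤ)
      ≤ R * (lctb - esta) - E' := by
    have := htotal
    rw [← hsplit] at this
    linarith
  have hcardu : ((Finset.Ico (S u) (S u + p u) ∩ Finset.Ico esta lctb).card : ℤ)
      = max 0 (min (lctb - S u) (p u)) := by
    have hSu := (hS u hu).1
    rw [Finset.Ico_inter_Ico, Int.card_Ico, Int.toNat_eq_max]
    simp only [max_comm]
    omega
  refine ⟨h1, by rwa [hcardu] at h1, fun h2 h3 => ?_⟩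
  have h4 : r u * (lctb - S u) ≤ R * (lctb - esta) - E' := by
    rw [hcardu] at h1
    have : max 0 (min (lctb - S u) (p u)) = lctb - S u := by omega
    rwa [this] at h1
  have h5 : (lctb - S u : ℤ) ≤ ⌊((R * (lctb - esta) - E' : ℤ) : ℚ) / (r u : ℚ)⌋ := by
    rw [Int.le_floor, le_div_iff₀ (by exact_mod_cast hru)]
    exact_mod_cast (by linarith : (lctb - S u) * r u ≤ R * (lctb - esta) - E')
  omega
end
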